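/- arXiv:1803.09412 — 5 statements merged into one kernel-verified Lean document; each statement's English description precedes it below -/
import Mathlib

section
/- Let L be a real p×q matrix, M a real r×s matrix, and N a real p×s matrix, and let L⁺ and M⁺ be Moore–Penrose inverses of L and M respectively. Then the matrix equation L X M = N has a solution X (a q×r real matrix) if and only if L L⁺ N M⁺ M = N. Moreover, in that case every matrix of the form X = L⁺ N M⁺ + Y − L⁺ L Y M M⁺, where Y is an arbitrary real q×r matrix, is a solution of L X M = N. -/
open Matrix

/-- Solvability of the matrix equation `L X M = N` via Moore–Penrose
inverses, and the parametrization of solutions. -/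
theorem stmt_0 {p q r s : ℕ}
    (L : Matrix (Fin p) (Fin q) ℝ) (M : Matrix (Fin r) (Fin s) ℝ)
    (N : Matrix (Fin p) (Fin s) ℝ)
    (Ld : Matrix (Fin q) (Fin p) ℝ) (Md : Matrix (Fin s) (Fin r) ℝ)
    (hL1 : L * Ld * L = L) (hL2 : Ld * L * Ld = Ld)
    (hL3 : (L * Ld)ᵀ = L * Ld) (hL4 : (Ld * L)ᵀ = Ld * L)
    (hM1 : M * Md * M = M) (hM2 : Md * M * Md = Md)
    (hM3 : (M * Md)ᵀ = M * Md) (hM4 : (Md * M)ᵀ = Md * M) :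
    ((∃ X : Matrix (Fin q) (Fin r) ℝ, L * X * M = N) ↔ L * Ld * N * (Md * M) = N) ∧
    (L * Ld * N * (Md * M) = N →
      ∀ Y : Matrix (Fin q) (Fin r) ℝ,
        L * (Ld * N * Md + Y - Ld * L * Y * (M * Md)) * M = N) := by
  have hM1' : M * (Md * M) = M := by rw [← Matrix.mul_assoc, hM1]
  have hL1' : ∀ {n : ℕ} (Z : Matrix (Fin q) (Fin n) ℝ), L * (Ld * (L * Z)) = L * Z := by
    intro n Z
    rw [← Matrix.mul_assoc, ← Matrix.mul_assoc, hL1]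
  have key : L * Ld * N * (Md * M) = N →
      ∀ Y : Matrix (Fin q) (Fin r) ℝ,
        L * (Ld * N * Md + Y - Ld * L * Y * (M * Md)) * M = N := by
    intro h Y
    simp only [Matrix.mul_add, Matrix.mul_sub, Matrix.add_mul, Matrix.sub_mul,
      Matrix.mul_assoc] at h ⊢
    rw [hM1', hL1', h]
    abel
  refine ⟨⟨?_, fun h => ⟨Ld * N * Md, ?_⟩⟩, key⟩
  · rintro ⟨X, rfl⟩
    simp only [Matrix.mul_assoc]
    rw [hM1', hL1']
  · have := key h 0
    simpa using this
end

section
/- Let A, Q be real n×n matrices, B a real n×m matrix, R a symmetric real m×m matrix with Moore–Penrose inverse R⁺, and let P be a symmetric real n×n matrix satisfying the regular algebraic Riccati equation AᵀP + PA + Q − P B R⁺ Bᵀ P = 0 together with the regularity condition Bᵀ P = R R⁺ Bᵀ P. Let x : ℝ → ℝⁿ be differentiable and u : ℝ → ℝᵐ be such that x′(t) = A x(t) + B u(t) for all t. Then for all t, the derivative of t ↦ x(t)ᵀ P x(t) equals −x(t)ᵀ Q x(t) − u(t)ᵀ R u(t) + (u(t) + R⁺ Bᵀ P x(t))ᵀ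 R (u(t) + R⁺ Bᵀ P x(t)). -/
open Matrix

lemma quadDeriv {n : ℕ} (P : Matrix (Fin n) (Fin n) ℝ) (x : ℝ → Fin n → ℝ) (x' : Fin n → ℝ) (t : ℝ)
    (hx : HasDerivAt x x' t) :
    HasDerivAt (fun t => x t ⬝ᵥ P.mulVec (x t)) (x' ⬝ᵥ P.mulVec (x t) + x t ⬝ᵥ P.mulVec x') t := by
  have h : ∀ i, HasDerivAt (fun s => x s i) (x' i) t := fun i => (hasDerivAt_pi.1 hx) i
  have hsum : ∀ i, HasDerivAt (fun s => ∑ j, P i j * x s j) (∑ j, P i j * x' j) t :=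
    fun i => HasDerivAt.fun_sum (fun j _ => (h j).const_mul (P i j))
  simp only [dotProduct, mulVec]
  rw [← Finset.sum_add_distrib]
  exact HasDerivAt.fun_sum (fun i _ => (h i).mul (hsum i))

lemma shiftDP {k l : ℕ} (M : Matrix (Fin k) (Fin l) ℝ) (c : Fin k → ℝ) (d : Fin l → ℝ) :
    c ⬝ᵥ M *ᵥ d = Mᵀ *ᵥ c ⬝ᵥ d := by
  rw [Matrix.dotProduct_mulVec, ← Matrix.mulVec_transpose]

lemma keyAlg {n m : ℕ}
    (A Q : Matrix (Fin n) (Fin n) ℝ) (B : Matrix (Fin n) (Fin m) ℝ)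
    (R : Matrix (Fin m) (Fin m) ℝ) (hRsymm : Rᵀ = R)
    (Rd : Matrix (Fin m) (Fin m) ℝ)
    (P : Matrix (Fin n) (Fin n) ℝ) (hPsymm : Pᵀ = P)
    (hRic : Aᵀ * P + P * A + Q - P * B * Rd * Bᵀ * P = 0)
    (hReg : Bᵀ * P = R * Rd * Bᵀ * P)
    (a : Fin n → ℝ) (v : Fin m → ℝ) :
    (A *ᵥ a + B *ᵥ v) ⬝ᵥ P *ᵥ a + a ⬝ᵥ P *ᵥ (A *ᵥ a + B *ᵥ v)
      = -(a ⬝ᵥ Q *ᵥ a) - v ⬝ᵥ R *ᵥ v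
        + (v + Rd *ᵥ (Bᵀ *ᵥ (P *ᵥ a))) ⬝ᵥ R *ᵥ (v + Rd *ᵥ (Bᵀ *ᵥ (P *ᵥ a))) := by
  have hw0 : Bᵀ *ᵥ (P *ᵥ a) = (Bᵀ * P) *ᵥ a := Matrix.mulVec_mulVec a Bᵀ P
  set w : Fin m → ℝ := (Bᵀ * P) *ᵥ a with hwdef
  have hReg' : (R * Rd) * (Bᵀ * P) = Bᵀ * P := by
    rw [← Matrix.mul_assoc]; exact hReg.symm
  have hw : (R * Rd) *ᵥ w = w := by
    rw [hwdef, Matrix.mulVec_mulVec, hReg']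
  have hA : Aᵀ * P + P * A = P * B * Rd * Bᵀ * P - Q := by
    rw [eq_sub_iff_add_eq]
    exact sub_eq_zero.mp hRic
  have e1 : A *ᵥ a ⬝ᵥ P *ᵥ a = a ⬝ᵥ (Aᵀ * P) *ᵥ a := by
    have h := shiftDP Aᵀ a (P *ᵥ a)
    rw [transpose_transpose] at h
    rw [← h, Matrix.mulVec_mulVec]
  have e3 : a ⬝ᵥ P *ᵥ (A *ᵥ a) = a ⬝ᵥ (P * A) *ᵥ a := by
    rw [Matrix.mulVec_mulVec]
  have e2 : B *ᵥ v ⬝ᵥ P *ᵥ a = v ⬝ᵥ w := by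
    have h := shiftDP Bᵀ v (P *ᵥ a)
    rw [transpose_transpose] at h
    rw [← h, hw0]
  have e4 : a ⬝ᵥ P *ᵥ (B *ᵥ v) = w ⬝ᵥ v := by
    rw [Matrix.mulVec_mulVec, shiftDP, Matrix.transpose_mul, hPsymm, ← hwdef]
  have e6 : a ⬝ᵥ (P * B * Rd * Bᵀ * P) *ᵥ a = Rdᵀ *ᵥ w ⬝ᵥ w := by
    rw [Matrix.mul_assoc (P * B * Rd) Bᵀ P, ← Matrix.mulVec_mulVec a (P * B * Rd) (Bᵀ * P),
      ← hwdef, shiftDP, Matrix.transpose_mul, Matrix.transpose_mul, hPsymm,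
      ← Matrix.mulVec_mulVec a (Rdᵀ) (Bᵀ * P), ← hwdef]
  have e5 : a ⬝ᵥ (Aᵀ * P) *ᵥ a + a ⬝ᵥ (P * A) *ᵥ a = Rdᵀ *ᵥ w ⬝ᵥ w - a ⬝ᵥ Q *ᵥ a := by
    rw [← dotProduct_add, ← Matrix.add_mulVec, hA, Matrix.sub_mulVec, dotProduct_sub, e6]
  have f2 : v ⬝ᵥ R *ᵥ (Rd *ᵥ w) = v ⬝ᵥ w := by
    rw [Matrix.mulVec_mulVec, hw]
  have f3 : (Rd *ᵥ w) ⬝ᵥ R *ᵥ v = w ⬝ᵥ v := by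
    rw [shiftDP, hRsymm, Matrix.mulVec_mulVec, hw]
  have f4 : (Rd *ᵥ w) ⬝ᵥ R *ᵥ (Rd *ᵥ w) = Rdᵀ *ᵥ w ⬝ᵥ w := by
    rw [shiftDP, hRsymm, Matrix.mulVec_mulVec w R Rd, hw, shiftDP Rd w w]
  rw [hw0]
  simp only [Matrix.mulVec_add, dotProduct_add, add_dotProduct]
  rw [e1, e2, e3, e4, f2, f3, f4]
  linarith [e5]

/-- Derivative of the quadratic Lyapunov-like function `x(t)ᵀ P x(t)`
along trajectories of `x' = A x + B u`, under the regular algebraic Riccati equation. -/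
theorem stmt_2 {n m : ℕ}
    (A Q : Matrix (Fin n) (Fin n) ℝ) (B : Matrix (Fin n) (Fin m) ℝ)
    (R : Matrix (Fin m) (Fin m) ℝ) (hRsymm : Rᵀ = R)
    (Rd : Matrix (Fin m) (Fin m) ℝ)
    (hR1 : R * Rd * R = R) (hR2 : Rd * R * Rd = Rd)
    (hR3 : (R * Rd)ᵀ = R * Rd) (hR4 : (Rd * R)ᵀ = Rd * R)
    (P : Matrix (Fin n) (Fin n) ℝ) (hPsymm : Pᵀ = P)
    (hRic : Aᵀ * P + P * A + Q - P * B * Rd * Bᵀ * P = 0)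
    (hReg : Bᵀ * P = R * Rd * Bᵀ * P)
    (x : ℝ → Fin n → ℝ) (u : ℝ → Fin m → ℝ)
    (hx : ∀ t : ℝ, HasDerivAt x (A.mulVec (x t) + B.mulVec (u t)) t) :
    ∀ t : ℝ, HasDerivAt (fun t => x t ⬝ᵥ P.mulVec (x t))
      (-(x t ⬝ᵥ Q.mulVec (x t)) - u t ⬝ᵥ R.mulVec (u t)
        + (u t + Rd.mulVec (Bᵀ.mulVec (P.mulVec (x t)))) ⬝ᵥ
          R.mulVec (u t + Rd.mulVec (Bᵀ.mulVec (P.mulVec (x t))))) t := by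
  intro t
  have h := quadDeriv P x (A.mulVec (x t) + B.mulVec (u t)) t (hx t)
  rwa [keyAlg A Q B R hRsymm Rd P hPsymm hRic hReg (x t) (u t)] at h
end

section
/- Let A, Q be real n×n matrices with Q symmetric, B a real n×m matrix, R a symmetric real m×m matrix with Moore–Penrose inverse R⁺, and let P be a symmetric real n×n matrix satisfying AᵀP + PA + Q − P B R⁺ Bᵀ P = 0 and Bᵀ P = R R⁺ Bᵀ P. Let z : ℝ → ℝᵐ be continuous, let x : ℝ → ℝⁿ be differentiable with x′(t) = A x(t) + B u(t) where u(t) = −R⁺ Bᵀ P x(t) + (I − R⁺ R) z(t), and suppose x(t) → 0 as t → ∞ and the improper integral ∫₀^∞ ( x(t)ᵀ Q x(t) + u(t)ᵀ R u(t) ) dt converges. Then ∫₀^∞ ( x(t)ᵀ Q x(t) + u(t)ᵀ R u(t) ) dt = x(0)ᵀ P x(0). -/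
open Matrix Filter

/-- Under the optimal control `u = −R⁺ Bᵀ P x + (I − R⁺ R) z`, the
infinite-horizon cost equals `x(0)ᵀ P x(0)` whenever the state tends to zero. -/
theorem stmt_6 {n m : ℕ}
    (A Q : Matrix (Fin n) (Fin n) ℝ) (hQsymm : Qᵀ = Q)
    (B : Matrix (Fin n) (Fin m) ℝ)
    (R : Matrix (Fin m) (Fin m) ℝ) (hRsymm : Rᵀ = R)
    (Rd : Matrix (Fin m) (Fin m) ℝ)
    (hR1 : R * Rd * R = R) (hR2 : Rd * R * Rd = Rd)
    (hR3 : (R * Rd)ᵀ = R * Rd) (hR4 : (Rd * R)ᵀ = Rd * R)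
    (P : Matrix (Fin n) (Fin n) ℝ) (hPsymm : Pᵀ = P)
    (hRic : Aᵀ * P + P * A + Q - P * B * Rd * Bᵀ * P = 0)
    (hReg : Bᵀ * P = R * Rd * Bᵀ * P)
    (z : ℝ → Fin m → ℝ) (hz : Continuous z)
    (x : ℝ → Fin n → ℝ) (u : ℝ → Fin m → ℝ)
    (hu : ∀ t : ℝ, u t = -(Rd.mulVec (Bᵀ.mulVec (P.mulVec (x t))))
      + ((1 : Matrix (Fin m) (Fin m) ℝ) - Rd * R).mulVec (z t))
    (hx : ∀ t : ℝ, HasDerivAt x (A.mulVec (x t) + B.mulVec (u t)) t)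
    (hx0 : Tendsto x atTop (nhds 0))
    (hint : MeasureTheory.IntegrableOn
      (fun t => x t ⬝ᵥ Q.mulVec (x t) + u t ⬝ᵥ R.mulVec (u t)) (Set.Ioi 0)) :
    ∫ t in Set.Ioi (0:ℝ), (x t ⬝ᵥ Q.mulVec (x t) + u t ⬝ᵥ R.mulVec (u t))
      = x 0 ⬝ᵥ P.mulVec (x 0) := by
  -- Step 1: the Moore–Penrose inverse of a symmetric matrix is symmetric.
  have hRdsymm : Rdᵀ = Rd := by
    have hYR : Rdᵀ * R = R * Rd := by
      have h := hR3; rw [transpose_mul, hRsymm] at h; exact h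
    have hRY : R * Rdᵀ = Rd * R := by
      have h := hR4; rw [transpose_mul, hRsymm] at h; exact h
    have hY1 : R * Rdᵀ * R = R := by
      have h := congrArg Matrix.transpose hR1
      rw [transpose_mul, transpose_mul, hRsymm] at h
      rw [Matrix.mul_assoc]; exact h
    have hY2 : Rdᵀ * R * Rdᵀ = Rdᵀ := by
      have h := congrArg Matrix.transpose hR2
      rw [transpose_mul, transpose_mul, hRsymm] at h
      rw [Matrix.mul_assoc]; exact h
    have s1 : (Rdᵀ * R)ᵀ = Rdᵀ * R := by rw [hYR]; exact hR3
    have s2 : (Rdᵀ * R) * (Rd * R) = Rdᵀ * R := by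
      calc (Rdᵀ * R) * (Rd * R) = Rdᵀ * (R * Rd * R) := by
            simp only [Matrix.mul_assoc]
        _ = Rdᵀ * R := by rw [hR1]
    have s3 : (Rd * R) * (Rdᵀ * R) = Rdᵀ * R := by
      calc (Rd * R) * (Rdᵀ * R) = ((Rdᵀ * R)ᵀ * (Rd * R)ᵀ)ᵀ := by
            rw [← transpose_mul, transpose_transpose]
        _ = ((Rdᵀ * R) * (Rd * R))ᵀ := by rw [s1, hR4]
        _ = (Rdᵀ * R)ᵀ := by rw [s2]
        _ = Rdᵀ * R := s1
    have hX : Rd = (Rdᵀ * R) * Rd := by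
      calc Rd = Rd * R * Rd := hR2.symm
        _ = Rd * (R * Rdᵀ * R) * Rd := by rw [hY1]
        _ = ((Rd * R) * (Rdᵀ * R)) * Rd := by simp only [Matrix.mul_assoc]
        _ = (Rdᵀ * R) * Rd := by rw [s3]
    have t1 : (R * Rdᵀ) * (R * Rd) = R * Rd := by
      calc (R * Rdᵀ) * (R * Rd) = (R * Rdᵀ * R) * Rd := by simp only [Matrix.mul_assoc]
        _ = R * Rd := by rw [hY1]
    have t2 : (R * Rd) * (R * Rdᵀ) = R * Rd := by
      have u1 : (R * Rdᵀ)ᵀ = R * Rdᵀ := by rw [hRY]; exact hR4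
      calc (R * Rd) * (R * Rdᵀ) = ((R * Rdᵀ)ᵀ * (R * Rd)ᵀ)ᵀ := by
            rw [← transpose_mul, transpose_transpose]
        _ = ((R * Rdᵀ) * (R * Rd))ᵀ := by rw [u1, hR3]
        _ = (R * Rd)ᵀ := by rw [t1]
        _ = R * Rd := hR3
    have hY : Rdᵀ = (Rdᵀ * R) * Rd := by
      calc Rdᵀ = Rdᵀ * R * Rdᵀ := hY2.symm
        _ = Rdᵀ * (R * Rd * R) * Rdᵀ := by rw [hR1]
        _ = Rdᵀ * ((R * Rd) * (R * Rdᵀ)) := by simp only [Matrix.mul_assoc]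
        _ = Rdᵀ * (R * Rd) := by rw [t2]
        _ = (Rdᵀ * R) * Rd := by simp only [Matrix.mul_assoc]
    rw [hY, ← hX]
  have hcomm : Rd * R = R * Rd := by
    have h := hR3; rw [transpose_mul, hRsymm, hRdsymm] at h; exact h
  -- Step 2: pointwise key identity: cost(t) + d/dt (xᵀ P x) = 0.
  have key : ∀ t : ℝ, x t ⬝ᵥ Q.mulVec (x t) + u t ⬝ᵥ R.mulVec (u t)
      + ((A.mulVec (x t) + B.mulVec (u t)) ⬝ᵥ P.mulVec (x t)
        + x t ⬝ᵥ P.mulVec (A.mulVec (x t) + B.mulVec (u t))) = 0 := by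
    intro t
    have hut := hu t
    set a : Fin n → ℝ := x t
    set zt : Fin m → ℝ := z t
    set ut : Fin m → ℝ := u t
    clear_value a zt ut
    have dp : ∀ {k l : ℕ} (M : Matrix (Fin k) (Fin l) ℝ) (v : Fin l → ℝ) (w : Fin k → ℝ),
        (M *ᵥ v) ⬝ᵥ w = v ⬝ᵥ (Mᵀ *ᵥ w) := by
      intro k l M v w
      rw [dotProduct_comm, dotProduct_mulVec, ← mulVec_transpose, dotProduct_comm]
    obtain ⟨w, hwdef⟩ : ∃ w, w = (Bᵀ * P) *ᵥ a := ⟨_, rfl⟩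
    simp only [mulVec_mulVec] at hut
    rw [← mulVec_mulVec, ← hwdef] at hut
    have hRegw : (R * Rd * (Bᵀ * P)) = Bᵀ * P := by
      simp only [← Matrix.mul_assoc]; exact hReg.symm
    have hw : (R * Rd) *ᵥ w = w := by
      rw [hwdef, mulVec_mulVec, hRegw]
    have hRu : R *ᵥ ut = -w := by
      rw [hut]
      simp only [mulVec_add, mulVec_neg, mulVec_mulVec]
      have h0 : R * (1 - Rd * R) = 0 := by
        rw [Matrix.mul_sub, Matrix.mul_one, ← Matrix.mul_assoc, hR1, sub_self]
      rw [h0, zero_mulVec, add_zero, hw]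
    have hNw : ((1 : Matrix (Fin m) (Fin m) ℝ) - Rd * R) *ᵥ w = 0 := by
      rw [sub_mulVec, one_mulVec, hcomm, hw, sub_self]
    have hNsymm : ((1 : Matrix (Fin m) (Fin m) ℝ) - Rd * R)ᵀ = 1 - Rd * R := by
      rw [transpose_sub, transpose_one, transpose_mul, hRsymm, hRdsymm, hcomm]
    have e2 : ut ⬝ᵥ w = -(w ⬝ᵥ Rd *ᵥ w) := by
      rw [hut, add_dotProduct, neg_dotProduct, dp, dp, hRdsymm, hNsymm, hNw,
        dotProduct_zero, add_zero]
    have e1 : ut ⬝ᵥ R *ᵥ ut = w ⬝ᵥ Rd *ᵥ w := by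
      rw [hRu, dotProduct_neg, e2, neg_neg]
    have e4 : (B *ᵥ ut) ⬝ᵥ (P *ᵥ a) = ut ⬝ᵥ w := by
      rw [dp, mulVec_mulVec, ← hwdef]
    have e6 : a ⬝ᵥ P *ᵥ (B *ᵥ ut) = ut ⬝ᵥ w := by
      rw [dotProduct_comm, dp, hPsymm]
      exact e4
    have e3 : (A *ᵥ a) ⬝ᵥ (P *ᵥ a) = a ⬝ᵥ ((Aᵀ * P) *ᵥ a) := by
      rw [dp, mulVec_mulVec]
    have e5 : a ⬝ᵥ P *ᵥ (A *ᵥ a) = a ⬝ᵥ ((P * A) *ᵥ a) := by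
      rw [mulVec_mulVec]
    have hRic' : Aᵀ * P + P * A + Q = P * B * Rd * Bᵀ * P := sub_eq_zero.mp hRic
    have e7 : a ⬝ᵥ ((Aᵀ * P + P * A + Q) *ᵥ a) = w ⬝ᵥ Rd *ᵥ w := by
      rw [hRic', hwdef, dp, transpose_mul, hPsymm, transpose_transpose]
      simp only [mulVec_mulVec, ← Matrix.mul_assoc]
    have e7' : a ⬝ᵥ Q *ᵥ a + a ⬝ᵥ ((Aᵀ * P) *ᵥ a) + a ⬝ᵥ ((P * A) *ᵥ a)
        = w ⬝ᵥ Rd *ᵥ w := by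
      rw [← e7, add_mulVec, add_mulVec, dotProduct_add, dotProduct_add]; ring
    rw [add_dotProduct, mulVec_add, dotProduct_add, e1, e4, e6, e3, e5]
    linarith [e2, e7']
  -- Step 3: derivative of the Lyapunov-type function V.
  set cost : ℝ → ℝ := fun t => x t ⬝ᵥ Q.mulVec (x t) + u t ⬝ᵥ R.mulVec (u t) with hcost
  set V : ℝ → ℝ := fun t => x t ⬝ᵥ P.mulVec (x t) with hV
  have hVderiv : ∀ t : ℝ, HasDerivAt V (-(cost t)) t := by
    intro t
    set v : Fin n → ℝ := A.mulVec (x t) + B.mulVec (u t) with hvdef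
    have hxi : ∀ i : Fin n, HasDerivAt (fun s => x s i) (v i) t := fun i =>
      ((ContinuousLinearMap.proj i : (Fin n → ℝ) →L[ℝ] ℝ).hasFDerivAt.comp_hasDerivAt t (hx t))
    have hmain : HasDerivAt V (v ⬝ᵥ P.mulVec (x t) + x t ⬝ᵥ P.mulVec v) t := by
      rw [hV]
      simp only [dotProduct, mulVec]
      have hterm : ∀ i : Fin n, HasDerivAt (fun s => x s i * ∑ j, P i j * x s j)
          (v i * ∑ j, P i j * x t j + x t i * ∑ j, P i j * v j) t := by
        intro i
        exact (hxi i).mul (HasDerivAt.fun_sum fun j _ => (hxi j).const_mul (P i j))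
      have h := HasDerivAt.fun_sum (fun i (_ : i ∈ Finset.univ) => hterm i)
      convert h using 1
      exacts [rfl, rfl, by simp [dotProduct, Finset.sum_add_distrib]]
    have hzero := key t
    have : v ⬝ᵥ P.mulVec (x t) + x t ⬝ᵥ P.mulVec v = -(cost t) := by
      rw [hcost, hvdef]; dsimp only; linarith [hzero]
    rwa [this] at hmain
  -- Step 4: continuity of the cost.
  have hxc : Continuous x := continuous_iff_continuousAt.mpr fun t => (hx t).continuousAt
  have huc : Continuous u := by
    have hueq : u = fun t => -(Rd.mulVec (Bᵀ.mulVec (P.mulVec (x t))))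
        + ((1 : Matrix (Fin m) (Fin m) ℝ) - Rd * R).mulVec (z t) := funext hu
    rw [hueq]
    exact ((continuous_const.matrix_mulVec
      (continuous_const.matrix_mulVec (continuous_const.matrix_mulVec hxc))).neg).add
      (continuous_const.matrix_mulVec hz)
  have hcostc : Continuous cost := by
    rw [hcost]
    exact (hxc.dotProduct (continuous_const.matrix_mulVec hxc)).add
      (huc.dotProduct (continuous_const.matrix_mulVec huc))
  -- Step 5: fundamental theorem of calculus on [0, b].
  have hFTC : ∀ b : ℝ, ∫ t in (0:ℝ)..b, cost t = V 0 - V b := by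
    intro b
    have h1 : ∫ t in (0:ℝ)..b, -(cost t)
        = V b - V 0 :=
      intervalIntegral.integral_eq_sub_of_hasDerivAt
        (fun t _ => hVderiv t) ((hcostc.neg).intervalIntegrable 0 b)
    rw [intervalIntegral.integral_neg] at h1
    linarith [h1]
  -- Step 6: pass to the limit b → ∞.
  have hlim1 : Tendsto (fun b => ∫ t in (0:ℝ)..b, cost t) atTop
      (nhds (∫ t in Set.Ioi (0:ℝ), cost t)) :=
    MeasureTheory.intervalIntegral_tendsto_integral_Ioi 0 hint tendsto_id
  have hg : Continuous (fun y : Fin n → ℝ => y ⬝ᵥ P.mulVec y) :=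
    continuous_id.dotProduct (continuous_const.matrix_mulVec continuous_id)
  have hVlim : Tendsto V atTop (nhds 0) := by
    have h := (hg.tendsto 0).comp hx0
    simpa [hV, Function.comp_def] using h
  have hlim2 : Tendsto (fun b => ∫ t in (0:ℝ)..b, cost t) atTop (nhds (V 0)) := by
    have h := (tendsto_const_nhds (x := V 0)).sub hVlim
    rw [sub_zero] at h
    exact h.congr fun b => (hFTC b).symm
  exact tendsto_nhds_unique hlim1 hlim2
end

section
/- Let R be a symmetric positive semidefinite real m×m matrix and let T be a real orthogonal m×m matrix such that Tᵀ R T is the block diagonal matrix diag(R₁, 0), where R₁ is an invertible symmetric m₁×m₁ matrix. Write B T = [B₁ B₂] in the corresponding block decomposition of an n×m matrix B, and let R⁺ = T · diag(R₁⁻¹, 0) · Tᵀ. Then R⁺ is a Moore–Penrose inverse of R, and a symmetric real n×n matrix P satisfies AᵀP + PA + Q − P B R⁺ Bᵀ P = 0 together with Bᵀ P = R R⁺ Bᵀ P if and only if it satisfies AᵀP + PA + Q − P B₁ R₁⁻¹ B₁ᵀ P = 0 together with B₂ᵀ P = 0. -/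
open Matrix

/-- After an orthogonal transformation diagonalizing `R` as
`diag(R₁, 0)` with `R₁` invertible, `R⁺ = T diag(R₁⁻¹, 0) Tᵀ` is a Moore–Penrose
inverse of `R`, and the regular Riccati equation is equivalent to the standard
Riccati equation in `B₁, R₁` together with `B₂ᵀ P = 0`. -/
theorem stmt_7 {n m₁ m₂ : ℕ}
    (A Q : Matrix (Fin n) (Fin n) ℝ)
    (R : Matrix (Fin m₁ ⊕ Fin m₂) (Fin m₁ ⊕ Fin m₂) ℝ) (hR : R.PosSemidef)
    (T : Matrix (Fin m₁ ⊕ Fin m₂) (Fin m₁ ⊕ Fin m₂) ℝ) (hT : Tᵀ * T = 1)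
    (R₁ : Matrix (Fin m₁) (Fin m₁) ℝ) (hR₁symm : R₁ᵀ = R₁) (hR₁inv : IsUnit R₁.det)
    (hdiag : Tᵀ * R * T = Matrix.fromBlocks R₁ 0 0 0)
    (B : Matrix (Fin n) (Fin m₁ ⊕ Fin m₂) ℝ)
    (B₁ : Matrix (Fin n) (Fin m₁) ℝ) (B₂ : Matrix (Fin n) (Fin m₂) ℝ)
    (hB : B * T = Matrix.fromCols B₁ B₂)
    (Rd : Matrix (Fin m₁ ⊕ Fin m₂) (Fin m₁ ⊕ Fin m₂) ℝ)
    (hRd : Rd = T * Matrix.fromBlocks R₁⁻¹ 0 0 0 * Tᵀ) :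
    (R * Rd * R = R ∧ Rd * R * Rd = Rd ∧ (R * Rd)ᵀ = R * Rd ∧ (Rd * R)ᵀ = Rd * R) ∧
    (∀ P : Matrix (Fin n) (Fin n) ℝ, Pᵀ = P →
      ((Aᵀ * P + P * A + Q - P * B * Rd * Bᵀ * P = 0 ∧ Bᵀ * P = R * Rd * Bᵀ * P) ↔
       (Aᵀ * P + P * A + Q - P * B₁ * R₁⁻¹ * B₁ᵀ * P = 0 ∧ B₂ᵀ * P = 0))) := by
  have hTT : T * Tᵀ = 1 := mul_eq_one_comm.mp hT
  have key : ∀ X Y : Matrix (Fin m₁ ⊕ Fin m₂) (Fin m₁ ⊕ Fin m₂) ℝ,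
      (T * X * Tᵀ) * (T * Y * Tᵀ) = T * (X * Y) * Tᵀ := by
    intro X Y
    simp only [Matrix.mul_assoc]
    rw [show Tᵀ * (T * (Y * Tᵀ)) = Y * Tᵀ from by rw [← Matrix.mul_assoc, hT, Matrix.one_mul]]
  have hRform : R = T * Matrix.fromBlocks R₁ 0 0 0 * Tᵀ := by
    rw [← hdiag]
    simp only [← Matrix.mul_assoc]
    rw [hTT, Matrix.one_mul, Matrix.mul_assoc, hTT, Matrix.mul_one]
  have hBform : B = Matrix.fromCols B₁ B₂ * Tᵀ := by
    rw [← hB, Matrix.mul_assoc, hTT, Matrix.mul_one]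
  have hR₁i : R₁ * R₁⁻¹ = 1 := Matrix.mul_nonsing_inv _ hR₁inv
  have hR₁i' : R₁⁻¹ * R₁ = 1 := Matrix.nonsing_inv_mul _ hR₁inv
  have hRRd : R * Rd = T * Matrix.fromBlocks 1 0 0 0 * Tᵀ := by
    rw [hRform, hRd, key]
    congr 2
    simp [Matrix.fromBlocks_multiply, hR₁i]
  have hRdR : Rd * R = T * Matrix.fromBlocks 1 0 0 0 * Tᵀ := by
    rw [hRform, hRd, key]
    congr 2
    simp [Matrix.fromBlocks_multiply, hR₁i']
  refine ⟨⟨?_, ?_, ?_, ?_⟩, ?_⟩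
  · rw [hRRd, hRform, key]
    congr 2
    simp [Matrix.fromBlocks_multiply]
  · rw [hRdR, hRd, key]
    congr 2
    simp [Matrix.fromBlocks_multiply]
  · rw [hRRd]
    simp [Matrix.transpose_mul, Matrix.fromBlocks_transpose, Matrix.mul_assoc]
  · rw [hRdR]
    simp [Matrix.transpose_mul, Matrix.fromBlocks_transpose, Matrix.mul_assoc]
  · intro P hP
    have hBt : Bᵀ = T * Matrix.fromRows B₁ᵀ B₂ᵀ := by
      rw [hBform]
      simp [Matrix.transpose_mul, Matrix.transpose_fromCols]
    have cancel : ∀ {α : Type} (X : Matrix (Fin m₁ ⊕ Fin m₂) α ℝ), Tᵀ * (T * X) = X := by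
      intro α X
      rw [← Matrix.mul_assoc, hT, Matrix.one_mul]
    have hBRdBt : B * Rd * Bᵀ = B₁ * R₁⁻¹ * B₁ᵀ := by
      rw [hBt, hBform, hRd]
      simp only [Matrix.mul_assoc, cancel]
      simp [Matrix.fromBlocks_mul_fromRows, Matrix.fromCols_mul_fromRows, Matrix.mul_assoc]
    have h1 : P * B * Rd * Bᵀ * P = P * B₁ * R₁⁻¹ * B₁ᵀ * P := by
      calc P * B * Rd * Bᵀ * P = P * (B * Rd * Bᵀ) * P := by
            simp only [Matrix.mul_assoc]
        _ = P * B₁ * R₁⁻¹ * B₁ᵀ * P := by rw [hBRdBt]; simp only [Matrix.mul_assoc]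
    have h2 : (Bᵀ * P = R * Rd * Bᵀ * P) ↔ B₂ᵀ * P = 0 := by
      have lhs1 : Bᵀ * P = T * Matrix.fromRows (B₁ᵀ * P) (B₂ᵀ * P) := by
        rw [hBt, Matrix.mul_assoc, Matrix.fromRows_mul]
      have rhs1 : R * Rd * Bᵀ * P = T * Matrix.fromRows (B₁ᵀ * P) 0 := by
        rw [hRRd, hBt]
        simp only [Matrix.mul_assoc, cancel]
        simp [Matrix.fromRows_mul, Matrix.fromBlocks_mul_fromRows, Matrix.mul_assoc]
        rfl
      rw [lhs1, rhs1]
      constructor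
      · intro h
        have h' : Matrix.fromRows (B₁ᵀ * P) (B₂ᵀ * P) = Matrix.fromRows (B₁ᵀ * P) 0 := by
          have := congrArg (fun M => Tᵀ * M) h
          rw [← cancel (Matrix.fromRows (B₁ᵀ * P) (B₂ᵀ * P)), h]
          exact cancel _
        exact ((Matrix.fromRows_ext_iff _ _ _ _).mp h').2
      · intro h
        rw [h]
        rfl
    rw [h1, h2]
end

section
/- Let A be a real n×n matrix, B a real n×m matrix, and let P be a symmetric positive definite real n×n matrix satisfying Aᵀ P + P A − P B Bᵀ P + I = 0. Then for every real number μ ≥ 1, every eigenvalue of the matrix A − μ B Bᵀ P (regarded as a complex matrix) has negative real part. -/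
open Matrix

/-- If `P > 0` solves `Aᵀ P + P A − P B Bᵀ P + I = 0`, then for any
`μ ≥ 1` the matrix `A − μ B Bᵀ P` is Hurwitz. -/
theorem stmt_9 {n m : ℕ}
    (A : Matrix (Fin n) (Fin n) ℝ) (B : Matrix (Fin n) (Fin m) ℝ)
    (P : Matrix (Fin n) (Fin n) ℝ) (hP : P.PosDef)
    (hRic : Aᵀ * P + P * A - P * B * Bᵀ * P + 1 = 0) :
    ∀ μ : ℝ, 1 ≤ μ →
      ∀ lam ∈ spectrum ℂ ((A - μ • (B * Bᵀ * P)).map (fun a => (a : ℂ))),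
        lam.re < 0 := by
  intro μ hμ lam hlam
  classical
  open scoped ComplexOrder in
  set M : Matrix (Fin n) (Fin n) ℝ := A - μ • (B * Bᵀ * P) with hMdef
  set f : ℝ →+* ℂ := Complex.ofRealHom with hfdef
  set Mc : Matrix (Fin n) (Fin n) ℂ := M.map f with hMc
  -- eigenvector
  rw [spectrum.mem_iff] at hlam
  have hdet : (lam • (1 : Matrix (Fin n) (Fin n) ℂ) - Mc).det = 0 := by
    by_contra h
    exact hlam (by
      rw [Algebra.algebraMap_eq_smul_one]
      exact (Matrix.isUnit_iff_isUnit_det _).2 (isUnit_iff_ne_zero.2 h))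
  obtain ⟨v, hv0, hv⟩ := (Matrix.exists_mulVec_eq_zero_iff).2 hdet
  have heig : Mc *ᵥ v = lam • v := by
    rw [Matrix.sub_mulVec, sub_eq_zero] at hv
    rw [← hv, Matrix.smul_mulVec, Matrix.one_mulVec]
  -- P symmetric over ℝ
  have hPT : Pᵀ = P := by
    rw [← Matrix.conjTranspose_eq_transpose_of_trivial]; exact hP.1
  -- conjTranspose of mapped real matrix
  have hmapH : ∀ {k l : ℕ} (X : Matrix (Fin k) (Fin l) ℝ),
      (X.map ⇑f)ᴴ = Xᵀ.map ⇑f := by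
    intro k l X
    ext i j
    simp [Matrix.conjTranspose_apply, hfdef, Matrix.transpose_apply]
  have hmap_smul : ∀ (r : ℝ) (X : Matrix (Fin n) (Fin n) ℝ),
      (r • X).map ⇑f = (r : ℂ) • X.map ⇑f := by
    intro r X; ext i j; simp [hfdef]
  -- real Lyapunov identity
  have h1 : Aᵀ * P = P * (B * (Bᵀ * P)) - 1 - P * A := by
    rw [← sub_eq_zero, ← hRic]
    simp only [Matrix.mul_assoc]
    abel
  have key : Mᵀ * P + P * M = -1 - (2 * μ - 1) • (P * (B * (Bᵀ * P))) := by
    simp only [hMdef, Matrix.transpose_sub, Matrix.transpose_smul, Matrix.transpose_mul,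
      Matrix.transpose_transpose, hPT, Matrix.sub_mul, Matrix.mul_sub,
      Matrix.smul_mul, Matrix.mul_smul, Matrix.mul_assoc, h1]
    module
  -- complexify
  set Pc : Matrix (Fin n) (Fin n) ℂ := P.map f with hPc
  set Qc : Matrix (Fin n) (Fin n) ℂ := (P * (B * (Bᵀ * P))).map f with hQc
  have keyC : Mcᴴ * Pc + Pc * Mc = -1 - ((2 * μ - 1 : ℝ) : ℂ) • Qc := by
    have h := congrArg (f.mapMatrix) key
    simp only [map_add, map_sub, map_neg, _root_.map_mul, _root_.map_one, RingHom.mapMatrix_apply] at h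
    rw [hmap_smul] at h
    rw [hMc, hmapH M, hPc, hQc]
    exact h
  -- eigen computation
  have E : ((starRingEnd ℂ) lam + lam) * (star v ⬝ᵥ (Pc *ᵥ v))
      = -(star v ⬝ᵥ v) - ((2 * μ - 1 : ℝ) : ℂ) * (star v ⬝ᵥ (Qc *ᵥ v)) := by
    have lhs : star v ⬝ᵥ ((Mcᴴ * Pc + Pc * Mc) *ᵥ v)
        = ((starRingEnd ℂ) lam + lam) * (star v ⬝ᵥ (Pc *ᵥ v)) := by
      rw [Matrix.add_mulVec, dotProduct_add]
      have e1 : star v ⬝ᵥ ((Pc * Mc) *ᵥ v) = lam * (star v ⬝ᵥ (Pc *ᵥ v)) := by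
        rw [← Matrix.mulVec_mulVec, heig, Matrix.mulVec_smul, dotProduct_smul, smul_eq_mul]
      have e2 : star v ⬝ᵥ ((Mcᴴ * Pc) *ᵥ v)
          = (starRingEnd ℂ) lam * (star v ⬝ᵥ (Pc *ᵥ v)) := by
        rw [← Matrix.mulVec_mulVec, Matrix.dotProduct_mulVec, ← Matrix.star_mulVec,
          heig, star_smul, smul_dotProduct, smul_eq_mul]
        rfl
      rw [e1, e2, add_mul]
    rw [← lhs, keyC, Matrix.sub_mulVec, dotProduct_sub, Matrix.neg_mulVec, Matrix.one_mulVec,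
      dotProduct_neg, Matrix.smul_mulVec, dotProduct_smul, smul_eq_mul]
  -- q is nonneg
  have hq_nonneg : (0 : ℂ) ≤ star v ⬝ᵥ (Qc *ᵥ v) := by
    have hQfact : Qc = ((P * B).map ⇑f) * ((P * B).map ⇑f)ᴴ := by
      rw [hmapH, hQc, ← Matrix.map_mul]
      rw [Matrix.transpose_mul, hPT]
      simp [Matrix.mul_assoc]
    rw [hQfact]
    exact Matrix.PosSemidef.dotProduct_mulVec_nonneg (Matrix.posSemidef_self_mul_conjTranspose _) v
  -- c is positive
  open scoped MatrixOrder in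
  set S : Matrix (Fin n) (Fin n) ℝ := CFC.sqrt P with hS
  open scoped MatrixOrder in
  have hSS : S * S = P := CFC.sqrt_mul_sqrt_self P (Matrix.PosSemidef.nonneg hP.posSemidef)
  have hST : Sᵀ = S := by
    rw [← Matrix.conjTranspose_eq_transpose_of_trivial]
    open scoped MatrixOrder in
    exact (Matrix.nonneg_iff_posSemidef.1 (CFC.sqrt_nonneg P)).1
  have hdetS : S.det ≠ 0 := by
    intro h
    have : P.det = 0 := by rw [← hSS, Matrix.det_mul, h, mul_zero]
    exact hP.det_pos.ne' this
  have hw0 : S.map ⇑f *ᵥ v ≠ 0 := by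
    intro h
    have h2 : (S.map ⇑f).det = 0 := Matrix.exists_mulVec_eq_zero_iff.1 ⟨v, hv0, h⟩
    have h3 : f S.det = (S.map ⇑f).det := by
      rw [RingHom.map_det]; rfl
    rw [h2, hfdef] at h3
    exact hdetS (by simpa using h3)
  have hc_pos : (0 : ℂ) < star v ⬝ᵥ (Pc *ᵥ v) := by
    have hfac : Pc = (S.map ⇑f)ᴴ * (S.map ⇑f) := by
      rw [hmapH, hST, hPc, ← Matrix.map_mul, hSS]
    rw [hfac, ← Matrix.mulVec_mulVec, Matrix.dotProduct_mulVec, ← Matrix.star_mulVec]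
    exact Matrix.dotProduct_star_self_pos_iff.2 hw0
  have hd_pos : (0 : ℂ) < star v ⬝ᵥ v :=
    Matrix.dotProduct_star_self_pos_iff.2 hv0
  -- finish
  have hlamc : (starRingEnd ℂ) lam + lam = ((2 * lam.re : ℝ) : ℂ) := by
    rw [add_comm, Complex.add_conj]
  rw [hlamc] at E
  have hre := congrArg Complex.re E
  have hcre : 0 < (star v ⬝ᵥ (Pc *ᵥ v)).re := (Complex.lt_def.1 hc_pos).1
  have hdre : 0 < (star v ⬝ᵥ v).re := (Complex.lt_def.1 hd_pos).1
  have hcim : (star v ⬝ᵥ (Pc *ᵥ v)).im = 0 := ((Complex.lt_def.1 hc_pos).2).symm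
  have hqre : 0 ≤ (star v ⬝ᵥ (Qc *ᵥ v)).re := (Complex.le_def.1 hq_nonneg).1
  simp only [Complex.mul_re, Complex.ofReal_re, Complex.ofReal_im, Complex.sub_re,
    Complex.neg_re, zero_mul, sub_zero, hcim, mul_zero] at hre
  nlinarith [hre, hcre, hdre, hqre, hμ]
end
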